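/- Fix real numbers α, β, γ. For (θ, φ, ψ, q₁, q₂, p₁, p₂) ∈ ℝ⁷, define the operator U(θ, φ, ψ, q₁, q₂, p₁, p₂) on L²(ℝ², ℂ) by (U(θ, φ, ψ, q₁, q₂, p₁, p₂)f)(r₁, s₂) = e^{i(θ − αq₂s₂ + αp₁r₁ + (α/2)q₁p₁ − (α/2)q₂p₂)} e^{i(φ − βp₁s₂ − (β/2)p₁p₂)} e^{i(ψ + γq₂r₁ + (γ/2)q₂q₁)} f(r₁ + q₁, s₂ + p₂). Then: (1) each such operator is unitary on L²(ℝ², ℂ); and (2) U(θ, φ, ψ, q, p) ∘ U(θ′, φ′, ψ′, q′, p′) = U(θ + θ′ + (α/2)(⟨q, p′⟩ − ⟨p, q′⟩), φ + φ′ + (β/2)(p ∧ p′), ψ + ψ′ + (γ/2)(q ∧ q′), q + q′, p + p′), where ⟨q, p⟩ = q₁p₁ + q₂p₂ and q ∧ p = q₁p₂ − q₂p₁. That is, U is a unitary representation of the triply extended group of translations of ℝ⁴. -/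

import Mathlib

open MeasureTheory

noncomputable section

/-- `L²(ℝ², ℂ)` with respect to Lebesgue measure, with variables written `(r₁, s₂)`. -/
abbrev L2R2 := MeasureTheory.Lp ℂ 2 (volume : Measure (Fin 2 → ℝ))

/-- Euclidean dot product on ℝ². -/
def dot (u w : Fin 2 → ℝ) : ℝ := u 0 * w 0 + u 1 * w 1

/-- Wedge product on ℝ²: `u ∧ w = u₁w₂ − u₂w₁`. -/
def wedge (u w : Fin 2 → ℝ) : ℝ := u 0 * w 1 - u 1 * w 0

/-- The pointwise action of the representation `U(θ, φ, ψ, q, p)` of the triply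
extended group of translations of ℝ⁴, with extension parameters `α`, `β`, `γ`:
`(U f)(r₁, s₂) = e^{i(θ − αq₂s₂ + αp₁r₁ + (α/2)q₁p₁ − (α/2)q₂p₂)}
e^{i(φ − βp₁s₂ − (β/2)p₁p₂)} e^{i(ψ + γq₂r₁ + (γ/2)q₂q₁)} f(r₁ + q₁, s₂ + p₂)`. -/
def TrAction (α β γ θ φ ψ : ℝ) (q p : Fin 2 → ℝ) (f : (Fin 2 → ℝ) → ℂ) :
    (Fin 2 → ℝ) → ℂ := fun r =>
  Complex.exp (Complex.I *
      ((θ - α * q 1 * r 1 + α * p 0 * r 0 + (α / 2) * q 0 * p 0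
        - (α / 2) * q 1 * p 1 : ℝ) : ℂ)) *
    Complex.exp (Complex.I * ((φ - β * p 0 * r 1 - (β / 2) * p 0 * p 1 : ℝ) : ℂ)) *
    Complex.exp (Complex.I * ((ψ + γ * q 1 * r 0 + (γ / 2) * q 1 * q 0 : ℝ) : ℂ)) *
    f ![r 0 + q 0, r 1 + p 1]

def phaseShift (g : (Fin 2 → ℝ) → ℝ) (v : Fin 2 → ℝ) (f : (Fin 2 → ℝ) → ℂ) :
    (Fin 2 → ℝ) → ℂ := fun r => Complex.exp (Complex.I * (g r : ℂ)) * f (r + v)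

lemma mpv (v : Fin 2 → ℝ) : MeasurePreserving (fun r : Fin 2 → ℝ => r + v) volume volume :=
  measurePreserving_add_right volume v

lemma abs_phase (x : ℝ) : ‖Complex.exp (Complex.I * (x:ℂ))‖ = 1 := by
  rw [Complex.norm_exp]; simp

lemma memℒp_phaseShift {g : (Fin 2 → ℝ) → ℝ} (hg : Measurable g) (v : Fin 2 → ℝ)
    {f : (Fin 2 → ℝ) → ℂ} (hf : MemLp f 2 (volume : Measure (Fin 2 → ℝ))) :
    MemLp (phaseShift g v f) 2 volume := by
  have h1 : MemLp (f ∘ (fun r : Fin 2 → ℝ => r + v)) 2 volume :=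
    hf.comp_measurePreserving (mpv v)
  refine ⟨(((Complex.measurable_exp.comp (measurable_const.mul
      (Complex.measurable_ofReal.comp hg))).aestronglyMeasurable).mul h1.1 : _), ?_⟩
  have : eLpNorm (phaseShift g v f) 2 volume = eLpNorm (f ∘ (fun r => r + v)) 2 volume := by
    apply eLpNorm_congr_norm_ae
    filter_upwards with r
    simp [phaseShift, abs_phase, Function.comp]
  rw [this]; exact h1.2

lemma eLpNorm_phaseShift {g : (Fin 2 → ℝ) → ℝ} (v : Fin 2 → ℝ) (f : L2R2) :
    eLpNorm (phaseShift g v ⇑f) 2 (volume : Measure (Fin 2 → ℝ)) = eLpNorm ⇑f 2 volume := by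
  have : eLpNorm (phaseShift g v ⇑f) 2 (volume : Measure (Fin 2 → ℝ))
      = eLpNorm (⇑f ∘ (fun r => r + v)) 2 volume := by
    apply eLpNorm_congr_norm_ae
    filter_upwards with r
    simp [phaseShift, abs_phase, Function.comp]
  rw [this]
  exact eLpNorm_comp_measurePreserving (Lp.aestronglyMeasurable f) (mpv v)

lemma phaseShift_congr {g : (Fin 2 → ℝ) → ℝ} (v : Fin 2 → ℝ)
    {F F' : (Fin 2 → ℝ) → ℂ} (h : F =ᵐ[volume] F') :
    phaseShift g v F =ᵐ[volume] phaseShift g v F' := by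
  have h2 : F ∘ (fun r : Fin 2 → ℝ => r + v) =ᵐ[volume] F' ∘ (fun r => r + v) :=
    (mpv v).quasiMeasurePreserving.ae_eq_comp h
  filter_upwards [h2] with r hr
  simp only [phaseShift]
  rw [show F (r + v) = F' (r + v) from hr]

def VL0 (g : (Fin 2 → ℝ) → ℝ) (hg : Measurable g) (v : Fin 2 → ℝ) (f : L2R2) : L2R2 :=
  MemLp.toLp _ (memℒp_phaseShift hg v (Lp.memLp f))

lemma coeFn_VL0 (g : (Fin 2 → ℝ) → ℝ) (hg : Measurable g) (v : Fin 2 → ℝ) (f : L2R2) :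
    ⇑(VL0 g hg v f) =ᵐ[volume] phaseShift g v ⇑f :=
  MemLp.coeFn_toLp _

/-- phase-shift as a linear map on L². -/
def VL (g : (Fin 2 → ℝ) → ℝ) (hg : Measurable g) (v : Fin 2 → ℝ) : L2R2 →ₗ[ℂ] L2R2 where
  toFun := VL0 g hg v
  map_add' f h := by
    apply Lp.ext
    calc ⇑(VL0 g hg v (f + h)) =ᵐ[volume] phaseShift g v ⇑(f + h) := coeFn_VL0 g hg v _
      _ =ᵐ[volume] phaseShift g v (⇑f + ⇑h) := phaseShift_congr v (Lp.coeFn_add f h)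
      _ = phaseShift g v ⇑f + phaseShift g v ⇑h := by
          funext r; simp [phaseShift]; ring
      _ =ᵐ[volume] ⇑(VL0 g hg v f) + ⇑(VL0 g hg v h) :=
          ((coeFn_VL0 g hg v f).symm.add (coeFn_VL0 g hg v h).symm)
      _ =ᵐ[volume] ⇑(VL0 g hg v f + VL0 g hg v h) := (Lp.coeFn_add _ _).symm
  map_smul' c f := by
    apply Lp.ext
    calc ⇑(VL0 g hg v (c • f)) =ᵐ[volume] phaseShift g v ⇑(c • f) := coeFn_VL0 g hg v _
      _ =ᵐ[volume] phaseShift g v (c • ⇑f) := phaseShift_congr v (Lp.coeFn_smul c f)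
      _ = c • phaseShift g v ⇑f := by
          funext r; simp [phaseShift]; ring
      _ =ᵐ[volume] c • ⇑(VL0 g hg v f) := (coeFn_VL0 g hg v f).symm.const_smul c
      _ =ᵐ[volume] ⇑(c • VL0 g hg v f) := (Lp.coeFn_smul _ _).symm

lemma coeFn_VL (g : (Fin 2 → ℝ) → ℝ) (hg : Measurable g) (v : Fin 2 → ℝ) (f : L2R2) :
    ⇑(VL g hg v f) =ᵐ[volume] phaseShift g v ⇑f :=
  coeFn_VL0 g hg v f
lemma norm_VL (g : (Fin 2 → ℝ) → ℝ) (hg : Measurable g) (v : Fin 2 → ℝ) (f : L2R2) :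
    ‖VL g hg v f‖ = ‖f‖ := by
  rw [Lp.norm_def, Lp.norm_def]
  congr 1
  refine (eLpNorm_congr_ae (coeFn_VL g hg v f)).trans (eLpNorm_phaseShift v f)

lemma VL_comp (g g' : (Fin 2 → ℝ) → ℝ) (hg : Measurable g) (hg' : Measurable g')
    (v v' : Fin 2 → ℝ) (hgc : Measurable (fun r => g r + g' (r + v))) (f : L2R2) :
    VL g hg v (VL g' hg' v' f) = VL (fun r => g r + g' (r + v)) hgc (v + v') f := by
  apply Lp.ext
  refine (coeFn_VL _ _ _ _).trans (((phaseShift_congr v (coeFn_VL g' hg' v' f)).trans ?_)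
    |>.trans (coeFn_VL _ _ _ f).symm)
  filter_upwards with r
  simp only [phaseShift]
  rw [add_assoc r v v']
  push_cast
  rw [mul_add, Complex.exp_add]
  ring

lemma VL0_comp (g g' : (Fin 2 → ℝ) → ℝ) (hg : Measurable g) (hg' : Measurable g')
    (v v' : Fin 2 → ℝ) (hgc : Measurable (fun r => g r + g' (r + v))) (f : L2R2) :
    VL0 g hg v (VL0 g' hg' v' f) = VL0 (fun r => g r + g' (r + v)) hgc (v + v') f := by
  apply Lp.ext
  refine (coeFn_VL0 _ _ _ _).trans (((phaseShift_congr v (coeFn_VL0 g' hg' v' f)).trans ?_)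
    |>.trans (coeFn_VL0 _ _ _ f).symm)
  filter_upwards with r
  simp only [phaseShift]
  rw [add_assoc r v v']
  push_cast
  rw [mul_add, Complex.exp_add]
  ring

lemma VL0_congr {g g' : (Fin 2 → ℝ) → ℝ} {v v' : Fin 2 → ℝ} (hgg : g = g') (hvv : v = v')
    (hg : Measurable g) (hg' : Measurable g') (f : L2R2) :
    VL0 g hg v f = VL0 g' hg' v' f := by subst hgg; subst hvv; rfl

lemma VL0_eq_self {g : (Fin 2 → ℝ) → ℝ} {v : Fin 2 → ℝ} (hg0 : g = fun _ => 0) (hv : v = 0)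
    (hg : Measurable g) (f : L2R2) : VL0 g hg v f = f := by
  subst hg0 hv
  apply Lp.ext
  refine (coeFn_VL0 _ _ _ f).trans ?_
  filter_upwards with r
  simp [phaseShift]

lemma measurable_inv_g {g : (Fin 2 → ℝ) → ℝ} (hg : Measurable g) (v : Fin 2 → ℝ) :
    Measurable fun r : Fin 2 → ℝ => -(g (r - v)) :=
  (hg.comp (measurable_id.sub measurable_const)).neg

/-- phase-shift as a linear isometry equivalence on L². -/
def Vli (g : (Fin 2 → ℝ) → ℝ) (hg : Measurable g) (v : Fin 2 → ℝ) : L2R2 ≃ₗᵢ[ℂ] L2R2 where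
  toLinearMap := VL g hg v
  invFun := VL0 (fun r => -(g (r - v))) (measurable_inv_g hg v) (-v)
  left_inv f := by
    show VL0 _ _ _ (VL0 g hg v f) = f
    rw [VL0_comp _ _ _ _ _ _ (by fun_prop) f]
    exact VL0_eq_self (by funext r; simp [sub_eq_add_neg]) (by simp) _ f
  right_inv f := by
    show VL0 g hg v (VL0 (fun r => -(g (r - v))) (measurable_inv_g hg v) (-v) f) = f
    rw [VL0_comp _ _ _ _ _ _ (by fun_prop) f]
    exact VL0_eq_self (by funext r; simp) (by simp) _ f
  norm_map' := norm_VL g hg v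

lemma Vli_apply (g : (Fin 2 → ℝ) → ℝ) (hg : Measurable g) (v : Fin 2 → ℝ) (f : L2R2) :
    Vli g hg v f = VL0 g hg v f := by with_unfolding_all rfl

def Gfun (α β γ θ φ ψ : ℝ) (q p : Fin 2 → ℝ) : (Fin 2 → ℝ) → ℝ := fun r =>
  (θ - α * q 1 * r 1 + α * p 0 * r 0 + (α / 2) * q 0 * p 0 - (α / 2) * q 1 * p 1)
  + (φ - β * p 0 * r 1 - (β / 2) * p 0 * p 1)
  + (ψ + γ * q 1 * r 0 + (γ / 2) * q 1 * q 0)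

lemma measurable_Gfun (α β γ θ φ ψ : ℝ) (q p : Fin 2 → ℝ) :
    Measurable (Gfun α β γ θ φ ψ q p) := by
  unfold Gfun; fun_prop

lemma shift_vec (r : Fin 2 → ℝ) (q p : Fin 2 → ℝ) :
    r + ![q 0, p 1] = ![r 0 + q 0, r 1 + p 1] := by
  funext i
  fin_cases i <;> simp

/-- `U` is a unitary representation of the triply extended group of translations of
ℝ⁴: (1) each `U(θ, φ, ψ, q, p)` is a unitary operator on `L²(ℝ², ℂ)` acting (a.e.)
by the stated formula, and (2) `U(θ,φ,ψ,q,p) ∘ U(θ′,φ′,ψ′,q′,p′) =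
U(θ+θ′+(α/2)(⟨q,p′⟩−⟨p,q′⟩), φ+φ′+(β/2)(p∧p′), ψ+ψ′+(γ/2)(q∧q′), q+q′, p+p′)`. -/
theorem triply_extended_unitary_representation (α β γ : ℝ) :
    ∃ U : ℝ → ℝ → ℝ → (Fin 2 → ℝ) → (Fin 2 → ℝ) → (L2R2 ≃ₗᵢ[ℂ] L2R2),
      (∀ (θ φ ψ : ℝ) (q p : Fin 2 → ℝ) (f : L2R2),
        ⇑(U θ φ ψ q p f) =ᵐ[volume] TrAction α β γ θ φ ψ q p ⇑f) ∧
      (∀ (θ φ ψ : ℝ) (q p : Fin 2 → ℝ) (θ' φ' ψ' : ℝ) (q' p' : Fin 2 → ℝ)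
         (f : L2R2),
        U θ φ ψ q p (U θ' φ' ψ' q' p' f)
          = U (θ + θ' + (α / 2) * (dot q p' - dot p q'))
              (φ + φ' + (β / 2) * wedge p p')
              (ψ + ψ' + (γ / 2) * wedge q q') (q + q') (p + p') f) := by
  refine ⟨fun θ φ ψ q p =>
    Vli (Gfun α β γ θ φ ψ q p) (measurable_Gfun α β γ θ φ ψ q p) ![q 0, p 1], ?_, ?_⟩
  · intro θ φ ψ q p f
    rw [Vli_apply]
    refine (coeFn_VL0 _ _ _ f).trans ?_
    filter_upwards with r
    simp only [phaseShift, TrAction, Gfun, shift_vec]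
    push_cast
    rw [mul_add, mul_add, Complex.exp_add, Complex.exp_add]
  · intro θ φ ψ q p θ' φ' ψ' q' p' f
    rw [Vli_apply, Vli_apply, Vli_apply,
      VL0_comp _ _ _ _ _ _ ((measurable_Gfun α β γ θ φ ψ q p).add
        ((measurable_Gfun α β γ θ' φ' ψ' q' p').comp (by fun_prop))) f]
    apply VL0_congr
    · funext r
      simp only [Gfun, dot, wedge, Pi.add_apply, Matrix.cons_val_zero, Matrix.cons_val_one,
        Matrix.head_cons]
      ring
    · funext i
      fin_cases i <;> simp
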